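/- There exists an unpredictable point of the Bernoulli shift σ on Σ₂: a point s ∈ Σ₂, a constant ε₀ > 0, and sequences of positive integers {α_n}, {β_n} diverging to infinity such that d(σ^{α_n}(s), s) → 0 as n → ∞ and d(σ^{α_n + β_n}(s), σ^{β_n}(s)) ≥ ε₀ for all n. -/

import Mathlib

open Filter Topology

noncomputable def dSigma (s t : ℕ → Fin 2) : ℝ :=
  ∑' k : ℕ, |((s k : ℝ)) - ((t k : ℝ))| / 2 ^ k

def shift (s : ℕ → Fin 2) : ℕ → Fin 2 := fun k => s (k + 1)

/-- digit-sum mod 2 (Thue–Morse). -/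
def tm (n : ℕ) : ℕ := (Nat.digits 2 n).sum % 2

lemma tm_lt_two (n : ℕ) : tm n < 2 := Nat.mod_lt _ (by norm_num)

lemma tm_zero : tm 0 = 0 := by simp [tm]

lemma tm_rec (n : ℕ) (h : n ≠ 0) : tm n = (n % 2 + tm (n / 2)) % 2 := by
  rw [tm, Nat.digits_def' (by norm_num : 1 < 2) (Nat.pos_of_ne_zero h)]
  simp [tm, Nat.add_mod]

lemma tm_two_mul (n : ℕ) : tm (2 * n) = tm n := by
  rcases Nat.eq_zero_or_pos n with rfl | hn
  · simp
  · rw [tm_rec (2 * n) (by omega)]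
    have h1 : (2 * n) % 2 = 0 := by omega
    have h2 : (2 * n) / 2 = n := by omega
    rw [h1, h2, Nat.zero_add, Nat.mod_eq_of_lt (tm_lt_two n)]

lemma tm_two_mul_add_one (n : ℕ) : tm (2 * n + 1) = (1 + tm n) % 2 := by
  rw [tm_rec (2 * n + 1) (by omega)]
  have h1 : (2 * n + 1) % 2 = 1 := by omega
  have h2 : (2 * n + 1) / 2 = n := by omega
  rw [h1, h2]

lemma tm_one : tm 1 = 1 := by
  have := tm_two_mul_add_one 0
  simpa [tm_zero] using this

lemma tm_pow (m : ℕ) : tm (2 ^ m) = 1 := by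
  induction m with
  | zero => simpa using tm_one
  | succ k ih => rw [pow_succ, mul_comm, tm_two_mul]; exact ih

lemma tm_five_pow (m : ℕ) : tm (5 * 2 ^ m) = 0 := by
  induction m with
  | zero =>
    have h5 : (5 : ℕ) = 2 * 2 + 1 := by norm_num
    have h2 : tm 2 = 1 := by simpa [tm_one] using tm_two_mul 1
    simp only [pow_zero, mul_one, h5, tm_two_mul_add_one]
    rw [show (2 : ℕ) = 2 * 1 by norm_num, tm_two_mul, tm_one]
  | succ k ih =>
    have : 5 * 2 ^ (k + 1) = 2 * (5 * 2 ^ k) := by ring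
    rw [this, tm_two_mul, ih]

lemma tm_three : tm 3 = 0 := by
  have := tm_two_mul_add_one 1
  simp [tm_one] at this
  simpa using this

lemma tm_add_three_pow : ∀ n k : ℕ, k < 2 ^ n → tm (3 * 2 ^ n + k) = tm k := by
  intro n
  induction n with
  | zero =>
    intro k hk
    interval_cases k
    simpa [tm_zero] using tm_three
  | succ m ih =>
    intro k hk
    have hq : k / 2 < 2 ^ m := by
      have := Nat.pow_succ 2 m
      omega
    rcases Nat.even_or_odd k with ⟨q, hqe⟩ | ⟨q, hqe⟩
    · have hkey : 3 * 2 ^ (m + 1) + k = 2 * (3 * 2 ^ m + q) := by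
        rw [pow_succ]; omega
      have hq' : q < 2 ^ m := by omega
      rw [hkey, tm_two_mul, ih q hq', hqe, ← two_mul, tm_two_mul]
    · have hkey : 3 * 2 ^ (m + 1) + k = 2 * (3 * 2 ^ m + q) + 1 := by
        rw [pow_succ]; omega
      have hq' : q < 2 ^ m := by
        have := Nat.pow_succ 2 m
        omega
      rw [hkey, tm_two_mul_add_one, ih q hq', hqe, tm_two_mul_add_one]

/-- the Thue–Morse point of Σ₂ -/
noncomputable def tms : ℕ → Fin 2 := fun k => ⟨tm k, tm_lt_two k⟩

lemma shift_iterate (s : ℕ → Fin 2) (m : ℕ) : shift^[m] s = fun k => s (k + m) := by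
  induction m with
  | zero => simp
  | succ p ih =>
    rw [Function.iterate_succ_apply', ih]
    funext k
    show s (k + 1 + p) = s (k + (p + 1))
    exact congrArg s (by omega)

lemma abs_coe_le_one (a b : Fin 2) : |((a : ℝ)) - ((b : ℝ))| ≤ 1 := by
  fin_cases a <;> fin_cases b <;> norm_num

lemma term_le (u v : ℕ → Fin 2) (k : ℕ) :
    |((u k : ℝ)) - ((v k : ℝ))| / 2 ^ k ≤ ((1:ℝ)/2) ^ k := by
  rw [div_pow, one_pow]
  gcongr
  exact abs_coe_le_one _ _

lemma dSigma_summable (u v : ℕ → Fin 2) :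
    Summable (fun k : ℕ => |((u k : ℝ)) - ((v k : ℝ))| / 2 ^ k) :=
  Summable.of_nonneg_of_le (fun k => by positivity) (term_le u v)
    (summable_geometric_of_lt_one (by norm_num) (by norm_num))

lemma dSigma_nonneg (u v : ℕ → Fin 2) : 0 ≤ dSigma u v :=
  tsum_nonneg fun k => by positivity

lemma dSigma_le_of_eq_prefix (u v : ℕ → Fin 2) (N : ℕ)
    (h : ∀ k < N, u k = v k) : dSigma u v ≤ 2 * (1/2) ^ N := by
  have hsum := dSigma_summable u v
  rw [dSigma, ← Summable.sum_add_tsum_nat_add N hsum]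
  have h1 : ∑ i ∈ Finset.range N, |((u i : ℝ)) - ((v i : ℝ))| / 2 ^ i = 0 := by
    apply Finset.sum_eq_zero
    intro i hi
    rw [h i (Finset.mem_range.mp hi)]
    simp
  rw [h1, zero_add]
  have h2 : ∑' k : ℕ, |((u (k + N) : ℝ)) - ((v (k + N) : ℝ))| / 2 ^ (k + N)
      ≤ ∑' k : ℕ, ((1:ℝ)/2) ^ (k + N) := by
    exact Summable.tsum_le_tsum (fun k => term_le u v (k + N))
      ((summable_nat_add_iff
        (f := fun k : ℕ => |((u k : ℝ)) - ((v k : ℝ))| / 2 ^ k) N).2 hsum)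
      ((summable_nat_add_iff (f := fun k : ℕ => ((1:ℝ)/2) ^ k) N).2
        (summable_geometric_of_lt_one (by norm_num) (by norm_num)))
  refine h2.trans ?_
  have h3 : ∑' k : ℕ, ((1:ℝ)/2) ^ (k + N) = ((1:ℝ)/2) ^ N * ∑' k : ℕ, ((1:ℝ)/2) ^ k := by
    rw [← tsum_mul_left]
    congr 1
    funext k
    rw [pow_add]
    ring
  rw [h3, tsum_geometric_of_lt_one (by norm_num) (by norm_num)]
  norm_num [mul_comm]

lemma fin_two_cases (a : Fin 2) : a = 0 ∨ a = 1 := by omega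

lemma dSigma_ge_one (u v : ℕ → Fin 2) (h : u 0 ≠ v 0) : 1 ≤ dSigma u v := by
  have h0 : |((u 0 : ℝ)) - ((v 0 : ℝ))| / 2 ^ 0 = 1 := by
    rcases fin_two_cases (u 0) with h1 | h1 <;> rcases fin_two_cases (v 0) with h2 | h2
    · exact absurd (h1.trans h2.symm) h
    · rw [h1, h2]; norm_num
    · rw [h1, h2]; norm_num
    · exact absurd (h1.trans h2.symm) h
  calc (1:ℝ) = |((u 0 : ℝ)) - ((v 0 : ℝ))| / 2 ^ 0 := h0.symm
    _ ≤ dSigma u v := Summable.le_tsum (dSigma_summable u v) 0 (fun k _ => by positivity)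

/-- there exists an unpredictable point of the Bernoulli shift on `Σ₂`. -/
theorem exists_unpredictable_point_bernoulli :
    ∃ s : ℕ → Fin 2, ∃ ε₀ > (0 : ℝ), ∃ α β : ℕ → ℕ,
      (∀ n, 0 < α n) ∧ (∀ n, 0 < β n) ∧
      Tendsto α atTop atTop ∧ Tendsto β atTop atTop ∧
      Tendsto (fun n => dSigma (shift^[α n] s) s) atTop (𝓝 0) ∧
      ∀ n, ε₀ ≤ dSigma (shift^[α n + β n] s) (shift^[β n] s) := by
  refine ⟨tms, 1, one_pos, fun n => 3 * 2 ^ n, fun n => 2 ^ (n + 1), ?_, ?_, ?_, ?_, ?_, ?_⟩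
  · intro n; positivity
  · intro n; positivity
  · apply tendsto_atTop_mono (fun n => ?_) tendsto_id
    have := Nat.lt_two_pow_self (n := n)
    simp only [id]
    omega
  · apply tendsto_atTop_mono (fun n => ?_) tendsto_id
    have := Nat.lt_two_pow_self (n := n + 1)
    simp only [id]
    omega
  · apply squeeze_zero (fun n => dSigma_nonneg _ _)
      (fun n => dSigma_le_of_eq_prefix _ _ (2 ^ n) ?_)
    · have h1 : Tendsto (fun m : ℕ => 2 * ((1:ℝ)/2) ^ m) atTop (𝓝 0) := by
        have := (tendsto_pow_atTop_nhds_zero_of_lt_one (by norm_num : (0:ℝ) ≤ 1/2)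
          (by norm_num : (1:ℝ)/2 < 1)).const_mul 2
        simpa using this
      exact h1.comp (tendsto_pow_atTop_atTop_of_one_lt one_lt_two)
    · intro k hk
      rw [shift_iterate]
      have := tm_add_three_pow n k hk
      simp only [tms]
      ext
      simp only
      rw [Nat.add_comm k (3 * 2 ^ n)] at *
      exact this
  · intro n
    apply dSigma_ge_one
    rw [shift_iterate, shift_iterate]
    intro hcontra
    simp only [tms, Fin.mk.injEq, Nat.zero_add] at hcontra
    have h2 : 3 * 2 ^ n + 2 ^ (n + 1) = 5 * 2 ^ n := by rw [pow_succ]; ring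
    rw [h2, tm_five_pow, tm_pow] at hcontra
    exact absurd hcontra (by norm_num)
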